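/- Let s ∈ ℂ with Re(s) > 0. Then the function t ↦ (Σ_{n=0}^∞ e^{-2^n t}) · t^{s-1} is integrable on (0, ∞), and ∫₀^∞ (Σ_{n=0}^∞ e^{-2^n t}) t^{s-1} dt = Γ(s)/(1 − 2^{-s}), where 2^{-s} = exp(−s log 2) and Γ is the complex Gamma function. -/

import Mathlib

open Real Filter Topology MeasureTheory Set

/-- Auxiliary: a series of integrable functions with summable integral norms is integrable. -/
lemma integrable_tsum_aux {α : Type*} [MeasurableSpace α] {μ : Measure α}
    {f : ℕ → α → ℂ} (hf : ∀ i, Integrable (f i) μ)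
    (h : Summable fun i ↦ ∫ a, ‖f i a‖ ∂μ) :
    Integrable (fun a ↦ ∑' i, f i a) μ := by
  have hf'' : ∀ i, AEMeasurable (fun x => (‖f i x‖₊ : ENNReal)) μ :=
    fun i => (hf i).1.enorm
  have key : ∀ i, ∫⁻ a, ‖f i a‖₊ ∂μ = ‖(∫ a, ‖f i a‖ ∂μ)‖₊ := by
    intro i
    rw [lintegral_coe_eq_integral (fun a => ‖f i a‖₊) (hf i).norm, ENNReal.coe_nnreal_eq, coe_nnnorm,
      Real.norm_of_nonneg (integral_nonneg (fun a ↦ norm_nonneg (f i a)))]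
    simp [coe_nnnorm]
  have hfin : ∫⁻ a, ∑' i, (‖f i a‖₊ : ENNReal) ∂μ ≠ ⊤ := by
    rw [lintegral_tsum hf'', funext key, ← ENNReal.coe_tsum]
    · exact ENNReal.coe_ne_top
    · simp_rw [← NNReal.summable_coe, coe_nnnorm]
      exact h.abs
  have hhh : ∀ᵐ a ∂μ, Summable fun n => (‖f n a‖₊ : ℝ) := by
    refine (ae_lt_top' (AEMeasurable.ennreal_tsum hf'') hfin).mono fun x hx => ?_
    rw [← ENNReal.tsum_coe_ne_top_iff_summable_coe]
    exact hx.ne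
  constructor
  · refine aestronglyMeasurable_of_tendsto_ae atTop
      (f := fun n a => ∑ i ∈ Finset.range n, f i a) (fun n => ?_) ?_
    · exact Finset.aestronglyMeasurable_fun_sum _ fun i _ => (hf i).1
    · filter_upwards [hhh] with a ha
      have : Summable fun n => f n a := by
        refine Summable.of_norm ?_
        simpa only [coe_nnnorm] using ha
      exact this.hasSum.tendsto_sum_nat
  · refine lt_of_le_of_lt (lintegral_mono_ae ?_) (lt_of_le_of_ne le_top hfin)
    filter_upwards [hhh] with a ha
    have hsn : Summable fun n => ‖f n a‖₊ := NNReal.summable_coe.mp ha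
    calc (‖∑' i, f i a‖₊ : ENNReal) ≤ ((∑' i, ‖f i a‖₊ : NNReal) : ENNReal) := by
          exact_mod_cast nnnorm_tsum_le hsn
      _ = ∑' i, (‖f i a‖₊ : ENNReal) := ENNReal.coe_tsum hsn

/-- For `Re s > 0`, the Mellin transform of the partition function
`K(t) = Σ_{n≥0} e^{-2ⁿ t}` converges (the integrand is integrable on `(0,∞)`) and equals
`Γ(s)/(1 - 2^{-s})`, where `2^{-s} = exp(-s log 2)`. -/
theorem stmt3 (s : ℂ) (hs : 0 < s.re) :
    IntegrableOn (fun t : ℝ =>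
      ((∑' n : ℕ, Real.exp (-(2 ^ n * t)) : ℝ) : ℂ) * (t : ℂ) ^ (s - 1))
      (Set.Ioi (0 : ℝ)) ∧
    ∫ t in Set.Ioi (0 : ℝ),
        ((∑' n : ℕ, Real.exp (-(2 ^ n * t)) : ℝ) : ℂ) * (t : ℂ) ^ (s - 1) =
      Complex.Gamma s / (1 - Complex.exp (-s * Real.log 2)) := by
  set f : ℕ → ℝ → ℂ :=
    fun n t => ((Real.exp (-(2 ^ n * t)) : ℝ) : ℂ) * (t : ℂ) ^ (s - 1) with hf_def
  -- the integrand is the pointwise sum of the f n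
  have heq : ∀ t : ℝ, ((∑' n : ℕ, Real.exp (-(2 ^ n * t)) : ℝ) : ℂ) * (t : ℂ) ^ (s - 1)
      = ∑' n, f n t := by
    intro t
    rw [Complex.ofReal_tsum, tsum_mul_right]
  -- each term is integrable
  have hterm : ∀ n : ℕ, IntegrableOn (f n) (Set.Ioi (0 : ℝ)) := by
    intro n
    have hpi : (0:ℝ) < 2 ^ n := pow_pos two_pos n
    have H := Complex.GammaIntegral_convergent hs
    rw [← mul_zero ((2:ℝ) ^ n), ← integrableOn_Ioi_comp_mul_left_iff _ _ hpi] at H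
    have hne : (((2:ℝ) ^ n : ℝ) : ℂ) ^ (s - 1) ≠ 0 := by
      rw [Ne, Complex.cpow_eq_zero_iff, not_and_or]
      exact Or.inl (Complex.ofReal_ne_zero.mpr hpi.ne')
    refine MeasureTheory.IntegrableOn.congr_fun
      (H.const_mul (1 / (((2:ℝ) ^ n : ℝ) : ℂ) ^ (s - 1)))
      (fun t (ht : 0 < t) => ?_) measurableSet_Ioi
    simp only [hf_def]
    rw [Complex.ofReal_mul, Complex.mul_cpow_ofReal_nonneg hpi.le ht.le]
    field_simp
  -- the integral of the norm of each term
  have hnorm : ∀ n : ℕ, ∫ t in Set.Ioi (0:ℝ), ‖f n t‖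
      = (1 / 2 ^ n : ℝ) ^ s.re * Real.Gamma s.re := by
    intro n
    have hpi : (0:ℝ) < 2 ^ n := pow_pos two_pos n
    rw [← Real.integral_rpow_mul_exp_neg_mul_Ioi hs hpi]
    refine setIntegral_congr_fun measurableSet_Ioi (fun t (ht : 0 < t) => ?_)
    simp only [hf_def, norm_mul, Complex.norm_real, Real.norm_eq_abs, Real.abs_exp,
      Complex.norm_cpow_eq_rpow_re_of_pos ht, Complex.sub_re,
      Complex.one_re]
    ring
  -- summability of the integrals of norms
  have hsum : Summable fun n => ∫ t in Set.Ioi (0:ℝ), ‖f n t‖ := by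
    simp_rw [hnorm]
    apply Summable.mul_right
    have h1 : ∀ n : ℕ, (1 / 2 ^ n : ℝ) ^ s.re = ((1/2 : ℝ) ^ s.re) ^ n := by
      intro n
      rw [← one_div_pow, ← Real.rpow_natCast ((1/2:ℝ)) n, ← Real.rpow_natCast _ n,
        ← Real.rpow_mul (by norm_num), ← Real.rpow_mul (by norm_num), mul_comm]
    simp_rw [h1]
    exact summable_geometric_of_lt_one (Real.rpow_nonneg (by norm_num) _)
      (Real.rpow_lt_one (by norm_num) (by norm_num) hs)
  -- value of the integral of each term
  have hval : ∀ n : ℕ, ∫ t in Set.Ioi (0:ℝ), f n t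
      = Complex.Gamma s * Complex.exp (-s * Real.log 2) ^ n := by
    intro n
    have hpi : (0:ℝ) < 2 ^ n := pow_pos two_pos n
    have H := Complex.integral_cpow_mul_exp_neg_mul_Ioi hs hpi
    have : ∫ t in Set.Ioi (0:ℝ), f n t
        = ∫ t in Set.Ioi (0:ℝ), (t : ℂ) ^ (s - 1) *
            Complex.exp (-((((2:ℝ) ^ n : ℝ) : ℂ) * (t : ℂ))) := by
      refine setIntegral_congr_fun measurableSet_Ioi (fun t _ => ?_)
      simp only [hf_def]
      rw [mul_comm, Complex.ofReal_exp]
      congr 2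
      push_cast
      ring
    rw [this, H]
    rw [show (1 / ((((2:ℝ) ^ n : ℝ)) : ℂ)) = ((1 / 2 ^ n : ℝ) : ℂ) by push_cast; ring]
    have h2 : ((1 / 2 ^ n : ℝ) : ℂ) ^ s = Complex.exp (-s * Real.log 2) ^ n := by
      rw [Complex.cpow_def_of_ne_zero (by
        exact_mod_cast Complex.ofReal_ne_zero.mpr (by positivity : (1 / 2 ^ n : ℝ) ≠ 0)),
        ← Complex.ofReal_log (by positivity), ← Complex.exp_nat_mul]
      congr 1
      rw [one_div, Real.log_inv, Real.log_pow]
      push_cast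
      ring
    rw [h2, mul_comm]
  have hintegrable : IntegrableOn (fun t : ℝ =>
      ((∑' n : ℕ, Real.exp (-(2 ^ n * t)) : ℝ) : ℂ) * (t : ℂ) ^ (s - 1))
      (Set.Ioi (0 : ℝ)) := by
    have := integrable_tsum_aux (μ := volume.restrict (Set.Ioi (0:ℝ))) hterm hsum
    exact this.congr (by filter_upwards with t using (heq t).symm)
  refine ⟨hintegrable, ?_⟩
  calc ∫ t in Set.Ioi (0 : ℝ),
        ((∑' n : ℕ, Real.exp (-(2 ^ n * t)) : ℝ) : ℂ) * (t : ℂ) ^ (s - 1)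
      = ∫ t in Set.Ioi (0 : ℝ), ∑' n, f n t := by simp_rw [heq]
    _ = ∑' n, ∫ t in Set.Ioi (0 : ℝ), f n t :=
        (integral_tsum_of_summable_integral_norm hterm hsum).symm
    _ = ∑' n, Complex.Gamma s * Complex.exp (-s * Real.log 2) ^ n := by simp_rw [hval]
    _ = Complex.Gamma s / (1 - Complex.exp (-s * Real.log 2)) := by
        rw [tsum_mul_left, tsum_geometric_of_norm_lt_one, div_eq_mul_inv]
        rw [Complex.norm_exp]
        apply Real.exp_lt_one_iff.mpr
        simp only [Complex.neg_re, Complex.mul_re, Complex.ofReal_re, Complex.ofReal_im,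
          mul_zero, sub_zero]
        have : 0 < Real.log 2 := Real.log_pos (by norm_num)
        nlinarith
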